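/- Let H be a complex Hilbert space and let A ⊆ B(H) be a unital C*-subalgebra. Then F(A) ⊆ A'', i.e., every operator T ∈ B(H) fixed by all A-maps lies in the double commutant of A. -/

import Mathlib

open NormedSpace

set_option maxHeartbeats 1000000
set_option synthInstance.maxHeartbeats 400000
set_option linter.unusedSectionVars false
set_option linter.unusedVariables false



variable {H : Type*} [NormedAddCommGroup H] [InnerProductSpace ℂ H] [CompleteSpace H]

/-- The bounded operator on the Hilbert space `H ⊕ ⋯ ⊕ H` (with its ℓ²-norm)
induced by an `n × n` matrix of bounded operators on `H`. -/
noncomputable def matOp {H : Type*} [NormedAddCommGroup H] [InnerProductSpace ℂ H]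
    {n : ℕ} (A : Matrix (Fin n) (Fin n) (H →L[ℂ] H)) :
    PiLp 2 (fun _ : Fin n => H) →L[ℂ] PiLp 2 (fun _ : Fin n => H) :=
  ((PiLp.continuousLinearEquiv 2 ℂ (fun _ : Fin n => H)).symm.toContinuousLinearMap.comp
      (ContinuousLinearMap.pi fun i => ∑ j, (A i j).comp (ContinuousLinearMap.proj j))).comp
    (PiLp.continuousLinearEquiv 2 ℂ (fun _ : Fin n => H)).toContinuousLinearMap

/-- A linear map on `B(H)` is completely contractive if all of its matrix amplifications
are contractive with respect to the C*-norms on `Mₙ(B(H)) ≅ B(H ⊕ ⋯ ⊕ H)`. -/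
def FullCC {H : Type*} [NormedAddCommGroup H] [InnerProductSpace ℂ H]
    (φ : (H →L[ℂ] H) →ₗ[ℂ] (H →L[ℂ] H)) : Prop :=
  ∀ (n : ℕ) (A : Matrix (Fin n) (Fin n) (H →L[ℂ] H)), ‖matOp (A.map φ)‖ ≤ ‖matOp A‖

/-- An `S`-map: a completely contractive linear map of `B(H)` fixing `S` pointwise. -/
def IsSMap {H : Type*} [NormedAddCommGroup H] [InnerProductSpace ℂ H]
    (S : Set (H →L[ℂ] H)) (φ : (H →L[ℂ] H) →ₗ[ℂ] (H →L[ℂ] H)) : Prop :=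
  FullCC φ ∧ ∀ s ∈ S, φ s = s

/-- A minimal `S`-projection: an idempotent `S`-map whose seminorm `T ↦ ‖E T‖`
is minimal among the seminorms of all `S`-maps. -/
def IsMinimalSProj {H : Type*} [NormedAddCommGroup H] [InnerProductSpace ℂ H]
    (S : Set (H →L[ℂ] H)) (E : (H →L[ℂ] H) →ₗ[ℂ] (H →L[ℂ] H)) : Prop :=
  IsSMap S E ∧ E ∘ₗ E = E ∧
    ∀ ψ : (H →L[ℂ] H) →ₗ[ℂ] (H →L[ℂ] H), IsSMap S ψ →
      (∀ T, ‖ψ T‖ ≤ ‖E T‖) → ∀ T, ‖ψ T‖ = ‖E T‖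

lemma matOp_apply {n : ℕ} (A : Matrix (Fin n) (Fin n) (H →L[ℂ] H))
    (v : PiLp 2 (fun _ : Fin n => H)) (i : Fin n) :
    matOp A v i = ∑ j, A i j (v j) := by
  simp [matOp, ContinuousLinearMap.sum_apply]

lemma matOp_mul {n : ℕ} (A B : Matrix (Fin n) (Fin n) (H →L[ℂ] H)) :
    matOp (A * B) = (matOp A).comp (matOp B) := by
  ext v i
  simp only [ContinuousLinearMap.comp_apply, matOp_apply, Matrix.mul_apply]
  simp only [ContinuousLinearMap.sum_apply, ContinuousLinearMap.mul_apply, map_sum]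
  exact Finset.sum_comm

lemma matOp_diagonal_apply {n : ℕ} (d : Fin n → (H →L[ℂ] H))
    (v : PiLp 2 (fun _ : Fin n => H)) (i : Fin n) :
    matOp (Matrix.diagonal d) v i = d i (v i) := by
  rw [matOp_apply]
  rw [Finset.sum_eq_single i]
  · simp
  · intro j _ hj
    simp [Matrix.diagonal_apply_ne' _ hj]
  · simp

lemma norm_matOp_diagonal_le {n : ℕ} (d : Fin n → (H →L[ℂ] H)) (hd : ∀ i, ‖d i‖ ≤ 1) :
    ‖matOp (Matrix.diagonal d)‖ ≤ 1 := by
  refine ContinuousLinearMap.opNorm_le_bound _ zero_le_one (fun v => ?_)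
  rw [one_mul]
  rw [PiLp.norm_eq_of_L2, PiLp.norm_eq_of_L2]
  apply Real.sqrt_le_sqrt
  apply Finset.sum_le_sum
  intro i _
  rw [matOp_diagonal_apply]
  have h1 : ‖d i (v i)‖ ≤ ‖v i‖ := by
    calc ‖d i (v i)‖ ≤ ‖d i‖ * ‖v i‖ := (d i).le_opNorm _
    _ ≤ 1 * ‖v i‖ := by gcongr; exact hd i
    _ = ‖v i‖ := one_mul _
  exact pow_le_pow_left₀ (norm_nonneg _) h1 2

/-- Conjugation by `U`. -/
noncomputable def conjMap (U : H →L[ℂ] H) : (H →L[ℂ] H) →ₗ[ℂ] (H →L[ℂ] H) where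
  toFun X := U * X * star U
  map_add' X Y := by simp [mul_add, add_mul]
  map_smul' c X := by simp [mul_smul_comm, smul_mul_assoc]

lemma norm_le_one_of_unitary {U : H →L[ℂ] H} (hU : U ∈ unitary (H →L[ℂ] H)) : ‖U‖ ≤ 1 := by
  have h1 : star U * U = 1 := hU.1
  have h2 : ‖U‖ * ‖U‖ = ‖(1 : H →L[ℂ] H)‖ := by
    rw [← CStarRing.norm_star_mul_self, h1]
  have h3 : ‖(1 : H →L[ℂ] H)‖ ≤ 1 := ContinuousLinearMap.norm_id_le
  nlinarith [norm_nonneg U]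

lemma conjMap_isSMap (A : StarSubalgebra ℂ (H →L[ℂ] H)) {U : H →L[ℂ] H}
    (hU : U ∈ unitary (H →L[ℂ] H)) (hUc : U ∈ Set.centralizer (A : Set (H →L[ℂ] H))) :
    IsSMap (A : Set (H →L[ℂ] H)) (conjMap U) := by
  constructor
  · intro n M
    have hmap : M.map (conjMap U) =
        Matrix.diagonal (fun _ => U) * M * Matrix.diagonal (fun _ => star U) := by
      ext i j
      simp [Matrix.mul_diagonal, Matrix.diagonal_mul, conjMap, mul_assoc]
    rw [hmap, matOp_mul, matOp_mul]
    calc ‖(matOp (Matrix.diagonal fun _ => U)).comp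
          ((matOp M).comp (matOp (Matrix.diagonal fun _ => star U)))‖
        ≤ ‖matOp (Matrix.diagonal fun _ : Fin n => U)‖ *
          (‖matOp M‖ * ‖matOp (Matrix.diagonal fun _ : Fin n => star U)‖) := by
          exact le_trans (ContinuousLinearMap.opNorm_comp_le _ _)
            (by gcongr; exact ContinuousLinearMap.opNorm_comp_le _ _)
      _ ≤ 1 * (‖matOp M‖ * 1) := by
          gcongr
          · exact norm_matOp_diagonal_le _ (fun _ => norm_le_one_of_unitary hU)
          · exact norm_matOp_diagonal_le _ (fun _ => by
              rw [norm_star]; exact norm_le_one_of_unitary hU)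
      _ = ‖matOp M‖ := by ring
  · intro a ha
    have hcomm : a * U = U * a := hUc a ha
    show U * a * star U = a
    rw [← hcomm, mul_assoc, hU.2, mul_one]

/-- For a unital C*-subalgebra `A ⊆ B(H)`, every operator fixed by all
`A`-maps lies in the double commutant: `F(A) ⊆ A''`. -/
theorem stmt_15 (A : StarSubalgebra ℂ (H →L[ℂ] H)) (hA : IsClosed (A : Set (H →L[ℂ] H)))
    (T : H →L[ℂ] H)
    (hT : ∀ φ : (H →L[ℂ] H) →ₗ[ℂ] (H →L[ℂ] H), IsSMap (A : Set (H →L[ℂ] H)) φ → φ T = T) :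
    T ∈ Set.centralizer (Set.centralizer (A : Set (H →L[ℂ] H))) := by
  -- Step 1: T commutes with every unitary in the commutant of A.
  have step1 : ∀ U ∈ unitary (H →L[ℂ] H), U ∈ Set.centralizer (A : Set (H →L[ℂ] H)) →
      U * T = T * U := by
    intro U hU hUc
    have h := hT (conjMap U) (conjMap_isSMap A hU hUc)
    have h' : U * T * star U = T := h
    calc U * T = U * T * (star U * U) := by rw [hU.1, mul_one]
      _ = (U * T * star U) * U := (mul_assoc _ _ _).symm
      _ = T * U := by rw [h']
  -- Step 2: T commutes with every selfadjoint element of the commutant of A.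
  have step2 : ∀ a : H →L[ℂ] H, IsSelfAdjoint a →
      a ∈ Set.centralizer (A : Set (H →L[ℂ] H)) → T * a = a * T := by
    intro a ha hac
    letI : NormedAlgebra ℚ (H →L[ℂ] H) := .restrictScalars ℚ ℂ _
    set x : H →L[ℂ] H := Complex.I • a with hx
    have hxskew : x ∈ skewAdjoint (H →L[ℂ] H) := by
      rw [skewAdjoint.mem_iff]
      simp [hx, star_smul, ha.star_eq, Complex.conj_I, neg_smul]
    have hcomm : ∀ t : ℝ, T * exp (t • x) = exp (t • x) * T := by
      intro t
      have hskew : t • x ∈ skewAdjoint (H →L[ℂ] H) := by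
        rw [skewAdjoint.mem_iff] at hxskew ⊢
        rw [star_smul, hxskew, star_trivial, smul_neg]
      have hUuni : exp (t • x) ∈ unitary (H →L[ℂ] H) :=
        exp_mem_unitary_of_mem_skewAdjoint hskew
      have hUc : exp (t • x) ∈ Set.centralizer (A : Set (H →L[ℂ] H)) := by
        intro m hm
        have h1 : Commute m a := hac m hm
        have h2 : Commute m (t • x) := ((h1.smul_right Complex.I).smul_right t)
        exact (h2.exp_right).eq
      exact (step1 _ hUuni hUc).symm
    -- differentiate at 0
    have hder : HasDerivAt (fun t : ℝ => exp (t • x)) x 0 := by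
      have := hasDerivAt_exp_smul_const (𝕂 := ℝ) x 0
      simpa using this
    have h1 : HasDerivAt (fun t : ℝ => T * exp (t • x)) (T * x) 0 := hder.const_mul T
    have h2 : HasDerivAt (fun t : ℝ => exp (t • x) * T) (x * T) 0 := hder.mul_const T
    have h1' : HasDerivAt (fun t : ℝ => exp (t • x) * T) (T * x) 0 := by
      have : (fun t : ℝ => T * exp (t • x)) = fun t : ℝ => exp (t • x) * T := by
        funext t; exact hcomm t
      rwa [this] at h1
    have hx' : T * x = x * T := h1'.unique h2
    have : Complex.I • (T * a) = Complex.I • (a * T) := by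
      rw [← mul_smul_comm, ← smul_mul_assoc]
      exact hx'
    exact smul_right_injective _ Complex.I_ne_zero this
  -- conclude
  intro S hS
  have hstar : star S ∈ Set.centralizer (A : Set (H →L[ℂ] H)) := by
    intro m hm
    have h1 : star m * S = S * star m := hS (star m) (A.star_mem' hm)
    calc m * star S = star (S * star m) := by rw [star_mul, star_star]
      _ = star (star m * S) := by rw [h1]
      _ = star S * m := by rw [star_mul, star_star]
  have haS : (S + star S) ∈ Set.centralizer (A : Set (H →L[ℂ] H)) := by
    intro m hm
    simp only [mul_add, add_mul, hS m hm, hstar m hm]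
  have hbS : (S - star S) ∈ Set.centralizer (A : Set (H →L[ℂ] H)) := by
    intro m hm
    simp only [mul_sub, sub_mul, hS m hm, hstar m hm]
  have hasa : IsSelfAdjoint (S + star S) := by
    simp [IsSelfAdjoint, star_add, add_comm]
  have hbsa : IsSelfAdjoint (Complex.I • (S - star S)) := by
    simp only [IsSelfAdjoint, star_smul, star_sub, star_star, Complex.star_def, Complex.conj_I,
      neg_smul, smul_sub, neg_sub]
    abel
  have hbc : (Complex.I • (S - star S)) ∈ Set.centralizer (A : Set (H →L[ℂ] H)) := by
    intro m hm
    rw [mul_smul_comm, smul_mul_assoc, hbS m hm]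
  have ha : T * (S + star S) = (S + star S) * T := step2 _ hasa haS
  have hb : T * (Complex.I • (S - star S)) = (Complex.I • (S - star S)) * T :=
    step2 _ hbsa hbc
  have hb' : T * (S - star S) = (S - star S) * T := by
    apply smul_right_injective (H →L[ℂ] H) Complex.I_ne_zero
    show Complex.I • (T * (S - star S)) = Complex.I • ((S - star S) * T)
    rw [← mul_smul_comm, ← smul_mul_assoc]
    exact hb
  have key : T * S + T * S = S * T + S * T := by
    calc T * S + T * S = T * (S + star S) + T * (S - star S) := by noncomm_ring
      _ = (S + star S) * T + (S - star S) * T := by rw [ha, hb']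
      _ = S * T + S * T := by noncomm_ring
  apply smul_right_injective (H →L[ℂ] H) (two_ne_zero (α := ℂ))
  show (2 : ℂ) • (S * T) = (2 : ℂ) • (T * S)
  rw [two_smul, two_smul]
  exact key.symm
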